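/- Let k > 3 and let G ≤ Aut(X_k^*) be a self-similar group that contains the automorphisms a_{ij} and a_{jl} for some pairwise distinct i, j, l ∈ X_k. Then G is not contracting. -/

import Mathlib

/-!
Common framework: automorphisms of the rooted tree `X_k^*`, root permutations,
sections, self-similar and contracting groups, Hanoi automorphisms and Hanoi
groups, following Makisumi–Stadnyk–Steinhurst, "Modified Hanoi Towers Groups
and Limit Spaces".

A word `x_n … x_1` over the alphabet `X_k = Fin k` is encoded as the list
`[x_n, …, x_1]`, whose head `x_n` is the first letter, i.e. the letter that a
tree automorphism reads (and permutes) first.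
-/

namespace Hanoi

/-- Words over the alphabet `X_k = Fin k`. -/
abbrev Word (k : ℕ) := List (Fin k)

/-- `e` is an automorphism of the rooted tree `X_k^*`: it fixes the root
(the empty word), preserves word length (levels) and preserves the tree
structure (words sharing an initial segment of length `n` are sent to words
sharing an initial segment of length `n`). -/
def IsTreeAut {k : ℕ} (e : Equiv.Perm (Word k)) : Prop :=
  (∀ w : Word k, (e w).length = w.length) ∧
    ∀ (w v : Word k) (n : ℕ), w.take n = v.take n → (e w).take n = (e v).take n

open Classical in
/-- The root permutation `σ_e` of a tree automorphism `e` (its action on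
one-letter words). -/
noncomputable def rootPerm {k : ℕ} (e : Equiv.Perm (Word k)) : Equiv.Perm (Fin k) :=
  if h : Function.Bijective (fun x : Fin k => ((e [x]).head?.getD x)) then
    Equiv.ofBijective _ h
  else 1

open Classical in
/-- The section `e|_x` of `e` at a letter `x`: the unique automorphism with
`e (x :: w) = σ_e x :: (e|_x) w` for all words `w`. -/
noncomputable def sec {k : ℕ} (e : Equiv.Perm (Word k)) (x : Fin k) : Equiv.Perm (Word k) :=
  if h : Function.Bijective (fun w : Word k => (e (x :: w)).tail) then
    Equiv.ofBijective _ h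
  else 1

/-- The section `e|_v` of `e` at a word `v = x_n … x_1`, defined by
`e|_v = (e|_{x_n})|_{x_{n-1} … x_1}`. -/
noncomputable def secW {k : ℕ} (e : Equiv.Perm (Word k)) : Word k → Equiv.Perm (Word k)
  | [] => e
  | x :: v => secW (sec e x) v

/-- A subgroup of the permutations of `X_k^*` is self-similar if it consists of
tree automorphisms and is closed under taking sections. -/
def IsSelfSimilar {k : ℕ} (G : Subgroup (Equiv.Perm (Word k))) : Prop :=
  (∀ g ∈ G, IsTreeAut g) ∧ ∀ g ∈ G, ∀ x : Fin k, sec g x ∈ G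

/-- A self-similar group `G` is contracting if there is a finite subset `N ⊆ G`
such that for every `g ∈ G` all sections of `g` at words of length at least
some `m` lie in `N`. -/
def IsContracting {k : ℕ} (G : Subgroup (Equiv.Perm (Word k))) : Prop :=
  ∃ N : Set (Equiv.Perm (Word k)), N.Finite ∧ N ⊆ (G : Set (Equiv.Perm (Word k))) ∧
    ∀ g ∈ G, ∃ m : ℕ, ∀ v : Word k, m ≤ v.length → secW g v ∈ N

/-- `N` is the nucleus of `G`: a smallest finite subset of `G` catching all
deep enough sections of every element of `G`. -/
def IsNucleus {k : ℕ} (G : Subgroup (Equiv.Perm (Word k)))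
    (N : Set (Equiv.Perm (Word k))) : Prop :=
  (N.Finite ∧ N ⊆ (G : Set (Equiv.Perm (Word k))) ∧
    ∀ g ∈ G, ∃ m : ℕ, ∀ v : Word k, m ≤ v.length → secW g v ∈ N) ∧
  ∀ N' : Set (Equiv.Perm (Word k)), N'.Finite → N' ⊆ (G : Set (Equiv.Perm (Word k))) →
    (∀ g ∈ G, ∃ m : ℕ, ∀ v : Word k, m ≤ v.length → secW g v ∈ N') → N ⊆ N'

/-- `a` is a Hanoi automorphism with set of inactive pegs `Q`: the section at
each active peg (element of the complement of `Q`) is trivial, the section at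
each inactive peg is `a` itself, and the root permutation fixes each inactive
peg. -/
def IsHanoiWith {k : ℕ} (a : Equiv.Perm (Word k)) (Q : Set (Fin k)) : Prop :=
  IsTreeAut a ∧ (∀ i ∉ Q, sec a i = 1) ∧ (∀ j ∈ Q, sec a j = a) ∧
    ∀ j ∈ Q, rootPerm a j = j

/-- `a` is a `k`-peg Hanoi automorphism. -/
def IsHanoiAut {k : ℕ} (a : Equiv.Perm (Word k)) : Prop := ∃ Q, IsHanoiWith a Q

open Classical in
/-- The set `Q_a` of inactive pegs of a Hanoi automorphism `a`; by convention
`Q_1 = X_k` (for `a ≠ 1` the set of inactive pegs is uniquely determined). -/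
noncomputable def inactivePegs {k : ℕ} (a : Equiv.Perm (Word k)) : Set (Fin k) :=
  if a = 1 then Set.univ
  else if h : ∃ Q, IsHanoiWith a Q then h.choose else ∅

/-- `S_{k,q}`: the set of Hanoi automorphisms over `X_k` with exactly `q`
inactive pegs. -/
noncomputable def hanoiSet (k q : ℕ) : Set (Equiv.Perm (Word k)) :=
  {a | IsHanoiAut a ∧ (inactivePegs a).ncard = q}

/-- `L = [s_n, …, s_1]` is a representation of `g` over the generating set `S`:
each `s_i ∈ S ∪ S⁻¹` and `g = s_n ⋯ s_2 s_1`. -/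
def IsRepOf {k : ℕ} (S : Set (Equiv.Perm (Word k))) (L : List (Equiv.Perm (Word k)))
    (g : Equiv.Perm (Word k)) : Prop :=
  (∀ s ∈ L, s ∈ S ∨ s⁻¹ ∈ S) ∧ L.prod = g

/-- The length `l(g)` of `g` with respect to `S`: the length of a minimal
representation (`0` for the identity). -/
noncomputable def repLength {k : ℕ} (S : Set (Equiv.Perm (Word k)))
    (g : Equiv.Perm (Word k)) : ℕ :=
  sInf {n | ∃ L, IsRepOf S L g ∧ L.length = n}

/-- The essential set of a representation: the intersection of the sets of
inactive pegs of its letters. -/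
noncomputable def essSet {k : ℕ} (L : List (Equiv.Perm (Word k))) : Set (Fin k) :=
  ⋂ s ∈ L, inactivePegs s

/-- The prenucleus of `G`: the set of elements `g ∈ G` with `g|_j = g` for some
letter `j`. -/
noncomputable def preNucleus {k : ℕ} (G : Subgroup (Equiv.Perm (Word k))) :
    Set (Equiv.Perm (Word k)) :=
  {g | g ∈ G ∧ ∃ j : Fin k, sec g j = g}

/-- The underlying function of the Hanoi Towers move `a_{ij}`: it changes the
first occurrence of `i` or `j` in a word by means of the transposition `(i j)`
and leaves the rest of the word unchanged. -/
def hanoiMoveFun {k : ℕ} (i j : Fin k) : Word k → Word k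
  | [] => []
  | x :: w => if x = i ∨ x = j then Equiv.swap i j x :: w else x :: hanoiMoveFun i j w

theorem hanoiMoveFun_involutive {k : ℕ} (i j : Fin k) :
    Function.Involutive (hanoiMoveFun i j) := by
  intro w
  induction w with
  | nil => rfl
  | cons x t ih =>
    by_cases h : x = i ∨ x = j
    · have h2 : Equiv.swap i j x = i ∨ Equiv.swap i j x = j := by
        rcases h with h | h <;> subst h <;> simp
      simp only [hanoiMoveFun, if_pos h, if_pos h2, Equiv.swap_apply_self]
    · simp only [hanoiMoveFun, if_neg h, ih]

/-- The Hanoi Towers move `a_{ij}`, as a permutation of `X_k^*`: its root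
permutation is the transposition `(i j)`, its sections at `i` and `j` are
trivial and all its other sections equal `a_{ij}` itself. -/
def hanoiMove {k : ℕ} (i j : Fin k) : Equiv.Perm (Word k) :=
  (hanoiMoveFun_involutive i j).toPerm

/-- The orbit of the letter `j` under the subgroup of `Sym(X_k)` generated by
the root permutations of the elements of `T`. -/
noncomputable def orbT {k : ℕ} (T : Finset (Equiv.Perm (Word k))) (j : Fin k) : Set (Fin k) :=
  MulAction.orbit (Subgroup.closure ((fun a => rootPerm a) '' (T : Set (Equiv.Perm (Word k))))) j

/-- The set `Fix(T)` of letters fixed by the root permutation of every element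
of `T`. -/
noncomputable def fixT {k : ℕ} (T : Finset (Equiv.Perm (Word k))) : Set (Fin k) :=
  {x | ∀ s ∈ T, rootPerm s x = x}

/-- Condition (*) on a generating set `S` of Hanoi automorphisms: for every
finite `T ⊆ S` with nonempty essential set and every letter `j ∉ Fix(T)`,
the orbit of `j` misses the inactive pegs of some element of `T`. -/
noncomputable def CondStar {k : ℕ} (S : Set (Equiv.Perm (Word k))) : Prop :=
  ∀ T : Finset (Equiv.Perm (Word k)), (T : Set (Equiv.Perm (Word k))) ⊆ S →
    (⋂ s ∈ T, inactivePegs s).Nonempty →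
    ∀ j : Fin k, j ∉ fixT T →
      ∃ s ∈ T, orbT T j ∩ inactivePegs s = ∅

open Classical in
/-- `d(g)`: the least number of distinct generators occurring among all
representations of `g` having nonempty essential set. -/
noncomputable def dCount {k : ℕ} (S : Set (Equiv.Perm (Word k)))
    (g : Equiv.Perm (Word k)) : ℕ :=
  sInf {M | ∃ L, IsRepOf S L g ∧ (essSet L).Nonempty ∧ L.toFinset.card = M}

/-- `S` is fully symmetric: for every non-identity `a ∈ S` and every
`φ ∈ Sym(X_k)`, the Hanoi automorphism `φ·a` with inactive pegs `φ(Q_a)` and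
root permutation `φ ∘ σ_a ∘ φ⁻¹` again lies in `S`. -/
noncomputable def FullySymmetric {k : ℕ} (S : Set (Equiv.Perm (Word k))) : Prop :=
  ∀ a ∈ S, a ≠ 1 → ∀ φ : Equiv.Perm (Fin k), ∀ b : Equiv.Perm (Word k),
    IsHanoiWith b (φ '' inactivePegs a) →
    rootPerm b = φ * rootPerm a * φ⁻¹ → b ∈ S

/-- The family `R̲_{k,n}`: the identity together with all Hanoi automorphisms
`a` such that (1) `Q_a ⊆ {m+1, …, m+n}` for some `m`, and (2) whenever
`i ∈ Q_a` the root permutation of `a` fixes `i-1, …, i-(n-1)`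
(all peg labels mod `k`). -/
noncomputable def Runder (k n : ℕ) : Set (Equiv.Perm (Word k)) :=
  {a | a = 1 ∨ (IsHanoiAut a ∧
    (∃ m : Fin k, ∀ q ∈ inactivePegs a, ∃ t : ℕ, 1 ≤ t ∧ t ≤ n ∧
      (q : ℕ) = ((m : ℕ) + t) % k) ∧
    ∀ i ∈ inactivePegs a, ∀ x : Fin k, ∀ t : ℕ, 1 ≤ t → t ≤ n - 1 →
      ((x : ℕ) + t) % k = (i : ℕ) → rootPerm a x = x)}

/-- The family `R̄_{k,n}`: the identity together with all Hanoi automorphisms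
`a` such that (1) `Q_a ⊆ {m+1, …, m+n}` for some `m`, and (2) whenever
`i ∈ Q_a` the root permutation of `a` fixes `i+1, …, i+(n-1)`
(all peg labels mod `k`). -/
noncomputable def Rover (k n : ℕ) : Set (Equiv.Perm (Word k)) :=
  {a | a = 1 ∨ (IsHanoiAut a ∧
    (∃ m : Fin k, ∀ q ∈ inactivePegs a, ∃ t : ℕ, 1 ≤ t ∧ t ≤ n ∧
      (q : ℕ) = ((m : ℕ) + t) % k) ∧
    ∀ i ∈ inactivePegs a, ∀ x : Fin k, ∀ t : ℕ, 1 ≤ t → t ≤ n - 1 →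
      (x : ℕ) = ((i : ℕ) + t) % k → rootPerm a x = x)}

/-- The finite word `x_m … x_1` (first letter `x_m`) read off from a
left-infinite sequence `… x_2 x_1`, encoded as `x : ℕ → Fin k` with
`x s = x_{s+1}`. -/
def wordOf {k : ℕ} (x : ℕ → Fin k) (m : ℕ) : Word k := (List.range m).reverse.map x

section Aux

variable {k : ℕ}

lemma treeAut_one : IsTreeAut (1 : Equiv.Perm (Word k)) :=
  ⟨fun _ => rfl, fun _ _ _ h => h⟩

lemma treeAut_mul {f g : Equiv.Perm (Word k)} (hf : IsTreeAut f) (hg : IsTreeAut g) :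
    IsTreeAut (f * g) := by
  constructor
  · intro w; rw [Equiv.Perm.mul_apply, hf.1, hg.1]
  · intro w v n h
    rw [Equiv.Perm.mul_apply, Equiv.Perm.mul_apply]
    exact hf.2 _ _ _ (hg.2 _ _ _ h)

lemma treeAut_pow {f : Equiv.Perm (Word k)} (hf : IsTreeAut f) (n : ℕ) :
    IsTreeAut (f ^ n) := by
  induction n with
  | zero => simpa using treeAut_one
  | succ n ih => rw [pow_succ]; exact treeAut_mul ih hf

lemma length_symm {e : Equiv.Perm (Word k)} (he : IsTreeAut e) (w : Word k) :
    (e.symm w).length = w.length := by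
  conv_rhs => rw [← e.apply_symm_apply w]
  rw [he.1]

lemma exists_singleton {e : Equiv.Perm (Word k)} (he : IsTreeAut e) (x : Fin k) :
    ∃ y, e [x] = [y] := by
  apply List.length_eq_one_iff.mp
  rw [he.1]
  rfl

lemma root_bij {e : Equiv.Perm (Word k)} (he : IsTreeAut e) :
    Function.Bijective (fun x : Fin k => ((e [x]).head?.getD x)) := by
  constructor
  · intro x y hxy
    obtain ⟨a, ha⟩ := exists_singleton he x
    obtain ⟨b, hb⟩ := exists_singleton he y
    simp only [ha, hb, List.head?_cons, Option.getD_some] at hxy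
    have : e [x] = e [y] := by rw [ha, hb, hxy]
    simpa using e.injective this
  · intro y
    have hl : (e.symm [y]).length = 1 := length_symm he [y]
    obtain ⟨x, hx⟩ := List.length_eq_one_iff.mp hl
    refine ⟨x, ?_⟩
    have : e [x] = [y] := by rw [← hx, e.apply_symm_apply]
    simp [this]

lemma rootPerm_apply {e : Equiv.Perm (Word k)} (he : IsTreeAut e) (x : Fin k) :
    rootPerm e x = (e [x]).head?.getD x := by
  unfold rootPerm
  rw [dif_pos (root_bij he)]
  rfl

lemma apply_singleton {e : Equiv.Perm (Word k)} (he : IsTreeAut e) (x : Fin k) :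
    e [x] = [rootPerm e x] := by
  obtain ⟨y, hy⟩ := exists_singleton he x
  rw [rootPerm_apply he, hy]
  rfl

lemma apply_cons_tail {e : Equiv.Perm (Word k)} (he : IsTreeAut e) (x : Fin k) (w : Word k) :
    e (x :: w) = rootPerm e x :: (e (x :: w)).tail := by
  have hlen : (e (x :: w)).length = w.length + 1 := by rw [he.1]; rfl
  obtain ⟨h, t, ht⟩ : ∃ h t, e (x :: w) = h :: t := by
    cases hc : e (x :: w) with
    | nil => rw [hc] at hlen; simp at hlen
    | cons h t => exact ⟨h, t, rfl⟩
  have htake := he.2 (x :: w) [x] 1 rfl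
  rw [apply_singleton he, ht] at htake
  simp only [List.take_succ_cons, List.take_zero] at htake
  rw [ht]
  simpa using htake

lemma sec_bij {e : Equiv.Perm (Word k)} (he : IsTreeAut e) (x : Fin k) :
    Function.Bijective (fun w : Word k => (e (x :: w)).tail) := by
  constructor
  · intro w v hwv
    simp only at hwv
    have h1 := apply_cons_tail he x w
    have h2 := apply_cons_tail he x v
    have : e (x :: w) = e (x :: v) := by rw [h1, h2, hwv]
    simpa using e.injective this
  · intro u
    have hlen : (e.symm (rootPerm e x :: u)).length = u.length + 1 := by
      rw [length_symm he]; rfl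
    obtain ⟨h, t, ht⟩ : ∃ h t, e.symm (rootPerm e x :: u) = h :: t := by
      cases hc : e.symm (rootPerm e x :: u) with
      | nil => rw [hc] at hlen; simp at hlen
      | cons h t => exact ⟨h, t, rfl⟩
    have hev : e (h :: t) = rootPerm e x :: u := by
      rw [← ht, e.apply_symm_apply]
    have hct := apply_cons_tail he h t
    rw [hev] at hct
    have hhead : rootPerm e h = rootPerm e x := (List.cons.injEq _ _ _ _).mp hct.symm |>.1
    have hx : h = x := (rootPerm e).injective hhead
    subst hx
    exact ⟨t, by show (e (h :: t)).tail = u; rw [hev]; rfl⟩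

lemma sec_apply {e : Equiv.Perm (Word k)} (he : IsTreeAut e) (x : Fin k) (w : Word k) :
    sec e x w = (e (x :: w)).tail := by
  unfold sec
  rw [dif_pos (sec_bij he x)]
  rfl

lemma apply_cons {e : Equiv.Perm (Word k)} (he : IsTreeAut e) (x : Fin k) (w : Word k) :
    e (x :: w) = rootPerm e x :: sec e x w := by
  rw [sec_apply he]
  exact apply_cons_tail he x w

lemma rootPerm_one : rootPerm (1 : Equiv.Perm (Word k)) = 1 := by
  ext x
  rw [rootPerm_apply treeAut_one]
  rfl

lemma sec_one (x : Fin k) : sec (1 : Equiv.Perm (Word k)) x = 1 := by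
  ext w
  rw [sec_apply treeAut_one]
  rfl

lemma rootPerm_mul {f g : Equiv.Perm (Word k)} (hf : IsTreeAut f) (hg : IsTreeAut g) :
    rootPerm (f * g) = rootPerm f * rootPerm g := by
  ext x
  rw [rootPerm_apply (treeAut_mul hf hg), Equiv.Perm.mul_apply, Equiv.Perm.mul_apply,
    apply_singleton hg, apply_singleton hf]
  rfl

lemma sec_mul {f g : Equiv.Perm (Word k)} (hf : IsTreeAut f) (hg : IsTreeAut g) (x : Fin k) :
    sec (f * g) x = sec f (rootPerm g x) * sec g x := by
  ext w
  rw [sec_apply (treeAut_mul hf hg), Equiv.Perm.mul_apply, Equiv.Perm.mul_apply,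
    apply_cons hg, apply_cons hf]
  rfl

lemma rootPerm_pow {f : Equiv.Perm (Word k)} (hf : IsTreeAut f) (n : ℕ) :
    rootPerm (f ^ n) = (rootPerm f) ^ n := by
  induction n with
  | zero => simpa using rootPerm_one
  | succ n ih => rw [pow_succ, pow_succ, rootPerm_mul (treeAut_pow hf n) hf, ih]

end Aux

section HM
variable {k : ℕ}

variable {k : ℕ}

lemma hanoiMove_apply (i j : Fin k) (w : Word k) :
    hanoiMove i j w = hanoiMoveFun i j w := rfl

lemma hanoiMoveFun_length (i j : Fin k) (w : Word k) :
    (hanoiMoveFun i j w).length = w.length := by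
  induction w with
  | nil => rfl
  | cons x t ih =>
    by_cases h : x = i ∨ x = j
    · simp [hanoiMoveFun, if_pos h]
    · simp [hanoiMoveFun, if_neg h, ih]

lemma hanoiMoveFun_take (i j : Fin k) (w : Word k) (n : ℕ) :
    (hanoiMoveFun i j w).take n = hanoiMoveFun i j (w.take n) := by
  induction w generalizing n with
  | nil => simp [hanoiMoveFun]
  | cons x t ih =>
    cases n with
    | zero => simp [hanoiMoveFun]
    | succ n =>
      by_cases h : x = i ∨ x = j
      · simp [hanoiMoveFun, if_pos h]
      · simp [hanoiMoveFun, if_neg h, ih]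

lemma treeAut_hanoiMove (i j : Fin k) : IsTreeAut (hanoiMove i j) := by
  constructor
  · intro w; rw [hanoiMove_apply, hanoiMoveFun_length]
  · intro w v n h
    rw [hanoiMove_apply, hanoiMove_apply, hanoiMoveFun_take, hanoiMoveFun_take, h]

lemma rootPerm_hanoiMove (i j : Fin k) (x : Fin k) :
    rootPerm (hanoiMove i j) x = Equiv.swap i j x := by
  rw [rootPerm_apply (treeAut_hanoiMove i j)]
  by_cases h : x = i ∨ x = j
  · simp [hanoiMove_apply, hanoiMoveFun, if_pos h]
  · push_neg at h
    rw [Equiv.swap_apply_of_ne_of_ne h.1 h.2]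
    simp [hanoiMove_apply, hanoiMoveFun, not_or.mpr h]

lemma sec_hanoiMove_active {i j x : Fin k} (h : x = i ∨ x = j) :
    sec (hanoiMove i j) x = 1 := by
  ext w
  rw [sec_apply (treeAut_hanoiMove i j)]
  simp [hanoiMove_apply, hanoiMoveFun, if_pos h]

lemma sec_hanoiMove_inactive {i j x : Fin k} (h : ¬(x = i ∨ x = j)) :
    sec (hanoiMove i j) x = hanoiMove i j := by
  ext w
  rw [sec_apply (treeAut_hanoiMove i j)]
  simp [hanoiMove_apply, hanoiMoveFun, if_neg h]


end HM

section Main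

variable {k : ℕ} {i j l : Fin k}

lemma secW_replicate {g : Equiv.Perm (Word k)} {x : Fin k} (h : sec g x = g) (m : ℕ) :
    secW g (List.replicate m x) = g := by
  induction m with
  | zero => rfl
  | succ m ih => rw [List.replicate_succ, secW, h, ih]

lemma treeAut_c : IsTreeAut (hanoiMove i j * hanoiMove j l) :=
  treeAut_mul (treeAut_hanoiMove i j) (treeAut_hanoiMove j l)

lemma rootPerm_c (x : Fin k) :
    rootPerm (hanoiMove i j * hanoiMove j l) x = Equiv.swap i j (Equiv.swap j l x) := by
  rw [rootPerm_mul (treeAut_hanoiMove i j) (treeAut_hanoiMove j l), Equiv.Perm.mul_apply,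
    rootPerm_hanoiMove, rootPerm_hanoiMove]

variable (hij : i ≠ j) (hjl : j ≠ l) (hil : i ≠ l)

include hij hjl hil

lemma sigma_i : rootPerm (hanoiMove i j * hanoiMove j l) i = j := by
  rw [rootPerm_c, Equiv.swap_apply_of_ne_of_ne hij hil, Equiv.swap_apply_left]

lemma sigma_j : rootPerm (hanoiMove i j * hanoiMove j l) j = l := by
  rw [rootPerm_c, Equiv.swap_apply_left, Equiv.swap_apply_of_ne_of_ne (Ne.symm hil) (Ne.symm hjl)]

lemma sigma_l : rootPerm (hanoiMove i j * hanoiMove j l) l = i := by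
  rw [rootPerm_c, Equiv.swap_apply_right, Equiv.swap_apply_right]

lemma sigma_other {x : Fin k} (h1 : x ≠ i) (h2 : x ≠ j) (h3 : x ≠ l) :
    rootPerm (hanoiMove i j * hanoiMove j l) x = x := by
  rw [rootPerm_c, Equiv.swap_apply_of_ne_of_ne h2 h3, Equiv.swap_apply_of_ne_of_ne h1 h2]

lemma sigma_cube : (rootPerm (hanoiMove i j * hanoiMove j l)) ^ 3 = 1 := by
  have h3 : (rootPerm (hanoiMove i j * hanoiMove j l)) ^ 3 =
      rootPerm (hanoiMove i j * hanoiMove j l) * rootPerm (hanoiMove i j * hanoiMove j l) *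
        rootPerm (hanoiMove i j * hanoiMove j l) := by
    rw [pow_succ, pow_succ, pow_one]
  ext x
  rw [h3, Equiv.Perm.mul_apply, Equiv.Perm.mul_apply]
  by_cases h1 : x = i
  · subst h1; rw [sigma_i hij hjl hil, sigma_j hij hjl hil, sigma_l hij hjl hil]; rfl
  by_cases h2 : x = j
  · subst h2; rw [sigma_j hij hjl hil, sigma_l hij hjl hil, sigma_i hij hjl hil]; rfl
  by_cases h3' : x = l
  · subst h3'; rw [sigma_l hij hjl hil, sigma_i hij hjl hil, sigma_j hij hjl hil]; rfl
  · rw [sigma_other hij hjl hil h1 h2 h3', sigma_other hij hjl hil h1 h2 h3',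
      sigma_other hij hjl hil h1 h2 h3']; rfl

lemma sec_c_i : sec (hanoiMove i j * hanoiMove j l) i = hanoiMove j l := by
  rw [sec_mul (treeAut_hanoiMove i j) (treeAut_hanoiMove j l), rootPerm_hanoiMove,
    Equiv.swap_apply_of_ne_of_ne hij hil,
    sec_hanoiMove_active (Or.inl rfl),
    sec_hanoiMove_inactive (by push_neg; exact ⟨hij, hil⟩), one_mul]

lemma sec_c_j : sec (hanoiMove i j * hanoiMove j l) j = hanoiMove i j := by
  rw [sec_mul (treeAut_hanoiMove i j) (treeAut_hanoiMove j l), rootPerm_hanoiMove,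
    Equiv.swap_apply_left,
    sec_hanoiMove_active (Or.inl rfl),
    sec_hanoiMove_inactive (by push_neg; exact ⟨Ne.symm hil, Ne.symm hjl⟩), mul_one]

lemma sec_c_l : sec (hanoiMove i j * hanoiMove j l) l = 1 := by
  rw [sec_mul (treeAut_hanoiMove i j) (treeAut_hanoiMove j l), rootPerm_hanoiMove,
    Equiv.swap_apply_right,
    sec_hanoiMove_active (Or.inr rfl),
    sec_hanoiMove_active (Or.inr rfl), mul_one]

lemma sec_c_other {x : Fin k} (h1 : x ≠ i) (h2 : x ≠ j) (h3 : x ≠ l) :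
    sec (hanoiMove i j * hanoiMove j l) x = hanoiMove i j * hanoiMove j l := by
  rw [sec_mul (treeAut_hanoiMove i j) (treeAut_hanoiMove j l), rootPerm_hanoiMove,
    Equiv.swap_apply_of_ne_of_ne h2 h3,
    sec_hanoiMove_inactive (by push_neg; exact ⟨h1, h2⟩),
    sec_hanoiMove_inactive (by push_neg; exact ⟨h2, h3⟩)]

lemma sec_c_cube_i :
    sec ((hanoiMove i j * hanoiMove j l) ^ 3) i = hanoiMove i j * hanoiMove j l := by
  set c := hanoiMove i j * hanoiMove j l with hc
  have h3 : c ^ 3 = (c * c) * c := by rw [pow_succ, pow_succ, pow_one]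
  have hcc : IsTreeAut (c * c) := treeAut_mul treeAut_c treeAut_c
  rw [h3, sec_mul hcc treeAut_c, sigma_i hij hjl hil,
    sec_mul treeAut_c treeAut_c, sigma_j hij hjl hil,
    sec_c_l hij hjl hil, sec_c_j hij hjl hil, sec_c_i hij hjl hil, one_mul]

lemma rootPerm_c_pow_3m (m : ℕ) :
    rootPerm ((hanoiMove i j * hanoiMove j l) ^ (3 * m)) = 1 := by
  rw [rootPerm_pow treeAut_c, pow_mul, sigma_cube hij hjl hil, one_pow]

lemma sec_c_pow_3m_i (m : ℕ) :
    sec ((hanoiMove i j * hanoiMove j l) ^ (3 * m)) i =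
      (hanoiMove i j * hanoiMove j l) ^ m := by
  induction m with
  | zero => simpa using sec_one i
  | succ m ih =>
    have hsplit : (hanoiMove i j * hanoiMove j l) ^ (3 * (m + 1)) =
        (hanoiMove i j * hanoiMove j l) ^ (3 * m) * (hanoiMove i j * hanoiMove j l) ^ 3 := by
      rw [← pow_add]; ring_nf
    rw [hsplit, sec_mul (treeAut_pow treeAut_c _) (treeAut_pow treeAut_c _)]
    have hr : rootPerm ((hanoiMove i j * hanoiMove j l) ^ 3) i = i := by
      have := rootPerm_c_pow_3m hij hjl hil 1
      rw [mul_one] at this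
      rw [this]; rfl
    rw [hr, ih, sec_c_cube_i hij hjl hil, pow_succ]

lemma c_pow_ne_one : ∀ n : ℕ, 0 < n → (hanoiMove i j * hanoiMove j l) ^ n ≠ 1 := by
  intro n
  induction n using Nat.strong_induction_on with
  | _ n ih =>
    intro hn hcn
    have hσn : (rootPerm (hanoiMove i j * hanoiMove j l)) ^ n = 1 := by
      rw [← rootPerm_pow treeAut_c, hcn, rootPerm_one]
    have hσne : rootPerm (hanoiMove i j * hanoiMove j l) ≠ 1 := by
      intro h
      have := sigma_i hij hjl hil
      rw [h] at this
      exact hij (by simpa using this)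
    haveI : Fact (Nat.Prime 3) := ⟨by norm_num⟩
    have hord : orderOf (rootPerm (hanoiMove i j * hanoiMove j l)) = 3 :=
      orderOf_eq_prime (sigma_cube hij hjl hil) hσne
    have h3n : 3 ∣ n := hord ▸ orderOf_dvd_of_pow_eq_one hσn
    obtain ⟨m, rfl⟩ := h3n
    have hm : 0 < m := by omega
    have hcm : (hanoiMove i j * hanoiMove j l) ^ m = 1 := by
      have := sec_c_pow_3m_i hij hjl hil m
      rw [hcn, sec_one] at this
      exact this.symm
    exact ih m (by omega) hm hcm

lemma c_pow_injective : Function.Injective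
    (fun n : ℕ => (hanoiMove i j * hanoiMove j l) ^ n) := by
  intro n m hnm
  simp only at hnm
  by_contra hne
  wlog h : n < m generalizing n m
  · exact this hnm.symm (Ne.symm hne) (by omega)
  have : (hanoiMove i j * hanoiMove j l) ^ (m - n) = 1 := by
    have hmm : (hanoiMove i j * hanoiMove j l) ^ (m - n) *
        (hanoiMove i j * hanoiMove j l) ^ n = (hanoiMove i j * hanoiMove j l) ^ n := by
      rw [← pow_add]
      rw [Nat.sub_add_cancel (le_of_lt h)]
      rw [hnm]
    exact mul_right_cancel (hmm.trans (one_mul _).symm)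
  exact c_pow_ne_one hij hjl hil (m - n) (by omega) this

end Main

/-- Proposition: `H^{(k)}` for `k > 3` is not contracting.
Any self-similar group over `X_k`, `k > 3`, containing the Hanoi Towers moves
`a_{ij}` and `a_{jl}` for pairwise distinct `i, j, l` is not contracting. -/
theorem hanoiTowers_noncontracting {k : ℕ} (hk : 3 < k)
    (G : Subgroup (Equiv.Perm (Word k))) (hG : IsSelfSimilar G)
    (i j l : Fin k) (hij : i ≠ j) (hjl : j ≠ l) (hil : i ≠ l)
    (haij : hanoiMove i j ∈ G) (hajl : hanoiMove j l ∈ G) :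
    ¬ IsContracting G := by
  rintro ⟨N, hNfin, hNG, hN⟩
  obtain ⟨x₀, h1, h2, h3⟩ : ∃ x : Fin k, x ≠ i ∧ x ≠ j ∧ x ≠ l := by
    by_contra h
    push_neg at h
    have hsub : (Finset.univ : Finset (Fin k)) ⊆ {i, j, l} := by
      intro x _
      by_cases hxi : x = i
      · simp [hxi]
      by_cases hxj : x = j
      · simp [hxj]
      · simp [h x hxi hxj]
    have hc3 : ({i, j, l} : Finset (Fin k)).card ≤ 3 := by
      calc ({i, j, l} : Finset (Fin k)).card
          ≤ ({j, l} : Finset (Fin k)).card + 1 := Finset.card_insert_le _ _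
        _ ≤ ({l} : Finset (Fin k)).card + 1 + 1 :=
            Nat.add_le_add_right (Finset.card_insert_le _ _) 1
        _ = 3 := by simp
    have := Finset.card_le_card hsub
    rw [Finset.card_univ, Fintype.card_fin] at this
    omega
  have hcG : hanoiMove i j * hanoiMove j l ∈ G := mul_mem haij hajl
  have hsec : sec (hanoiMove i j * hanoiMove j l) x₀ = hanoiMove i j * hanoiMove j l :=
    sec_c_other hij hjl hil h1 h2 h3
  have hfix : ∀ n : ℕ, sec ((hanoiMove i j * hanoiMove j l) ^ n) x₀ =
      (hanoiMove i j * hanoiMove j l) ^ n := by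
    intro n
    induction n with
    | zero => simpa using sec_one x₀
    | succ n ih =>
      rw [pow_succ, sec_mul (treeAut_pow treeAut_c n) treeAut_c,
        sigma_other hij hjl hil h1 h2 h3, ih, hsec, ← pow_succ]
  have hmem : ∀ n : ℕ, (hanoiMove i j * hanoiMove j l) ^ n ∈ N := by
    intro n
    obtain ⟨m, hm⟩ := hN ((hanoiMove i j * hanoiMove j l) ^ n) (pow_mem hcG n)
    have := hm (List.replicate m x₀) (by simp)
    rwa [secW_replicate (hfix n) m] at this
  exact (Set.infinite_of_injective_forall_mem (c_pow_injective hij hjl hil) hmem) hNfin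

end Hanoi
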